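/- Let (T,X) be a minimal topologically weakly mixing flow on a compact metric space X having at least two points, with T an abelian topological group. Then (T,X) is densely multi-dimensional Li-Yorke chaotic: for every increasing sequence F₁ ⊆ F₂ ⊆ ⋯ of compact subsets of T there exists a dense uncountable set Θ ⊆ X such that for every k ≥ 2 and all pairwise distinct x₁,…,x_k ∈ Θ there exist a point p ∈ X and sequences (t_n), (s_n) in T with s_n ∉ F_n for all n, such that t_n•x_i → p for each i and s_n•x_i → x_i for each i, as n → ∞. -/

import Mathlib

set_option linter.unusedSectionVars false
set_option maxHeartbeats 1000000
open Filter Topology Set Metric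

section Myc
variable {X : Type*} [MetricSpace X] [CompactSpace X]

private lemma exists_pair_subsets
    (hperf : ∀ U : Set X, IsOpen U → U.Nonempty → ∃ a ∈ U, ∃ b ∈ U, a ≠ b)
    {U : Set X} (hU : IsOpen U) (hne : U.Nonempty) :
    ∃ V₀ V₁ : Set X, (IsOpen V₀ ∧ V₀.Nonempty ∧ closure V₀ ⊆ U) ∧
      (IsOpen V₁ ∧ V₁.Nonempty ∧ closure V₁ ⊆ U) ∧
      Disjoint (closure V₀) (closure V₁) := by
  obtain ⟨a, ha, b, hb, hab⟩ := hperf U hU hne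
  obtain ⟨r₁, hr₁, hball₁⟩ := Metric.isOpen_iff.mp hU a ha
  obtain ⟨r₂, hr₂, hball₂⟩ := Metric.isOpen_iff.mp hU b hb
  have hd : 0 < dist a b := dist_pos.mpr hab
  set r : ℝ := min (min r₁ r₂) (dist a b) / 4 with hr
  have hr0 : 0 < r := by positivity
  refine ⟨ball a r, ball b r, ⟨isOpen_ball, ⟨a, mem_ball_self hr0⟩, ?_⟩,
    ⟨isOpen_ball, ⟨b, mem_ball_self hr0⟩, ?_⟩, ?_⟩
  · refine (closure_ball_subset_closedBall.trans (closedBall_subset_ball ?_)).trans hball₁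
    have : r ≤ r₁ / 4 := by
      have : min (min r₁ r₂) (dist a b) ≤ r₁ := le_trans (min_le_left _ _) (min_le_left _ _)
      linarith
    linarith
  · refine (closure_ball_subset_closedBall.trans (closedBall_subset_ball ?_)).trans hball₂
    have : r ≤ r₂ / 4 := by
      have : min (min r₁ r₂) (dist a b) ≤ r₂ := le_trans (min_le_left _ _) (min_le_right _ _)
      linarith
    linarith
  · refine Disjoint.mono closure_ball_subset_closedBall closure_ball_subset_closedBall
      (closedBall_disjoint_closedBall ?_)
    have : r ≤ dist a b / 4 := by
      have := min_le_right (min r₁ r₂) (dist a b); linarith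
    linarith


private lemma exists_multi_split
    (hperf : ∀ U : Set X, IsOpen U → U.Nonempty → ∃ a ∈ U, ∃ b ∈ U, a ≠ b) :
    ∀ (n : ℕ) (U : Set X), IsOpen U → U.Nonempty →
    ∃ V : (Fin n → Bool) → Set X,
      (∀ σ, IsOpen (V σ) ∧ (V σ).Nonempty ∧ closure (V σ) ⊆ U) ∧
      (∀ σ τ, σ ≠ τ → Disjoint (closure (V σ)) (closure (V τ))) := by
  intro n
  induction n with
  | zero =>
    intro U hU hne
    obtain ⟨V₀, _, h₀, _, _⟩ := exists_pair_subsets hperf hU hne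
    exact ⟨fun _ => V₀, fun _ => h₀, fun σ τ hστ => absurd (funext fun i => i.elim0) hστ⟩
  | succ n ih =>
    intro U hU hne
    obtain ⟨V₀, V₁, h₀, h₁, hdisj⟩ := exists_pair_subsets hperf hU hne
    obtain ⟨W₀, hW₀, hW₀d⟩ := ih V₀ h₀.1 h₀.2.1
    obtain ⟨W₁, hW₁, hW₁d⟩ := ih V₁ h₁.1 h₁.2.1
    refine ⟨fun σ => if σ 0 then W₁ (fun i => σ i.succ) else W₀ (fun i => σ i.succ), ?_, ?_⟩
    · intro σ
      cases hσ0 : σ 0 <;> simp only [hσ0, if_true, if_false, Bool.false_eq_true]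
      · exact ⟨(hW₀ _).1, (hW₀ _).2.1, (hW₀ _).2.2.trans (subset_closure.trans h₀.2.2)⟩
      · exact ⟨(hW₁ _).1, (hW₁ _).2.1, (hW₁ _).2.2.trans (subset_closure.trans h₁.2.2)⟩
    · intro σ τ hστ
      by_cases h0 : σ 0 = τ 0
      · have htail : (fun i : Fin n => σ i.succ) ≠ (fun i => τ i.succ) := by
          intro hc
          apply hστ
          funext i
          refine Fin.cases h0 (fun j => ?_) i
          exact congrFun hc j
        cases hσ0 : σ 0 <;> rw [hσ0] at h0 <;>
          simp only [hσ0, ← h0, if_true, if_false, Bool.false_eq_true]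
        · exact hW₀d _ _ htail
        · exact hW₁d _ _ htail
      · have h₀₁ : ∀ s t, closure s ⊆ V₀ → closure t ⊆ V₁ →
            Disjoint (closure s) (closure t) := fun s t hs ht =>
          hdisj.mono (hs.trans subset_closure) (ht.trans subset_closure)
        cases hσ0 : σ 0 <;> cases hτ0 : τ 0 <;> rw [hσ0, hτ0] at h0 <;> try exact absurd rfl h0
        · simp only [hσ0, hτ0, if_false, if_true, Bool.false_eq_true]
          exact (h₀₁ _ _ (hW₀ _).2.2 (hW₁ _).2.2)
        · simp only [hσ0, hτ0, if_false, if_true, Bool.false_eq_true]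
          exact (h₀₁ _ _ (hW₀ _).2.2 (hW₁ _).2.2).symm


private lemma shrink_one {I : Type*} [DecidableEq I] [Fintype I]
    (E : I → Set X) (hop : ∀ i, IsOpen (E i)) (hne : ∀ i, (E i).Nonempty)
    {k : ℕ} (ι : Fin k → I) (hι : Function.Injective ι)
    (G : Set (Fin k → X)) (hG : IsOpen G) (hGd : Dense G) :
    ∃ E' : I → Set X, (∀ i, IsOpen (E' i)) ∧ (∀ i, (E' i).Nonempty) ∧
      (∀ i, E' i ⊆ E i) ∧ {z : Fin k → X | ∀ a, z a ∈ E' (ι a)} ⊆ G := by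
  classical
  have hbox : IsOpen {z : Fin k → X | ∀ a, z a ∈ E (ι a)} := by
    have : {z : Fin k → X | ∀ a, z a ∈ E (ι a)} = Set.pi univ (fun a => E (ι a)) := by
      ext z; simp [Set.mem_pi]
    rw [this]
    exact isOpen_set_pi finite_univ (fun a _ => hop (ι a))
  have hboxne : {z : Fin k → X | ∀ a, z a ∈ E (ι a)}.Nonempty :=
    ⟨fun a => (hne (ι a)).choose, fun a => (hne (ι a)).choose_spec⟩
  obtain ⟨w, hwbox, hwG⟩ : ∃ w, w ∈ {z : Fin k → X | ∀ a, z a ∈ E (ι a)} ∧ w ∈ G := by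
    obtain ⟨w, hw1, hw2⟩ := dense_iff_inter_open.mp hGd _ hbox hboxne
    exact ⟨w, hw1, hw2⟩
  obtain ⟨ε, hε, hball⟩ := Metric.isOpen_iff.mp hG w hwG
  refine ⟨fun i => if h : ∃ a, ι a = i then E i ∩ ball (w h.choose) ε else E i, ?_, ?_, ?_, ?_⟩
  · intro i
    by_cases h : ∃ a, ι a = i <;> simp only [h, dif_pos, dif_neg, not_false_iff]
    · exact (hop i).inter isOpen_ball
    · exact hop i
  · intro i
    by_cases h : ∃ a, ι a = i
    · simp only [h, dif_pos]
      refine ⟨w h.choose, ?_, mem_ball_self hε⟩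
      have hh := hwbox h.choose
      rwa [h.choose_spec] at hh
    · simp only [h, dif_neg, not_false_iff]; exact hne i
  · intro i
    by_cases h : ∃ a, ι a = i <;> simp only [h, dif_pos, dif_neg, not_false_iff]
    · exact inter_subset_left
    · exact subset_rfl
  · intro z hz
    apply hball
    rw [mem_ball, dist_pi_lt_iff hε]
    intro a
    have h : ∃ b, ι b = ι a := ⟨a, rfl⟩
    have hc : h.choose = a := hι h.choose_spec
    have := hz a
    simp only [h, dif_pos, hc] at this
    exact mem_ball.mp this.2

private lemma shrink_list {I : Type*} [DecidableEq I] [Fintype I]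
    (L : List ((k : ℕ) × ((Fin k → I) × Set (Fin k → X))))
    (hL : ∀ c ∈ L, Function.Injective c.2.1 ∧ IsOpen c.2.2 ∧ Dense c.2.2) :
    ∀ (E : I → Set X), (∀ i, IsOpen (E i)) → (∀ i, (E i).Nonempty) →
    ∃ E' : I → Set X, (∀ i, IsOpen (E' i)) ∧ (∀ i, (E' i).Nonempty) ∧
      (∀ i, E' i ⊆ E i) ∧
      ∀ c ∈ L, {z : Fin c.1 → X | ∀ a, z a ∈ E' (c.2.1 a)} ⊆ c.2.2 := by
  induction L with
  | nil => exact fun E hop hne => ⟨E, hop, hne, fun _ => subset_rfl, fun c hc => absurd hc List.not_mem_nil⟩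
  | cons c L ih =>
    intro E hop hne
    obtain ⟨hcinj, hcop, hcd⟩ := hL c List.mem_cons_self
    obtain ⟨E₁, h₁op, h₁ne, h₁sub, h₁box⟩ := shrink_one E hop hne c.2.1 hcinj c.2.2 hcop hcd
    obtain ⟨E₂, h₂op, h₂ne, h₂sub, h₂box⟩ :=
      ih (fun d hd => hL d (List.mem_cons_of_mem c hd)) E₁ h₁op h₁ne
    refine ⟨E₂, h₂op, h₂ne, fun i => (h₂sub i).trans (h₁sub i), ?_⟩
    intro d hd
    rcases List.mem_cons.mp hd with rfl | hd
    · exact fun z hz => h₁box (fun a => h₂sub _ (hz a))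
    · exact h₂box d hd


private def MycInv (W : ℕ → Set X) (n : ℕ) (D : ℕ → (Fin n → Bool) → Set X) : Prop :=
  ∀ m : ℕ, m < n → ∀ σ : Fin n → Bool, IsOpen (D m σ) ∧ (D m σ).Nonempty ∧
    closure (D m σ) ⊆ W m ∧
    ∀ τ, σ ≠ τ → Disjoint (closure (D m σ)) (closure (D m τ))

private def MycTrans (G : ℕ → ∀ k : ℕ, Set (Fin k → X)) (n : ℕ)
    (D : ℕ → (Fin n → Bool) → Set X) (D' : ℕ → (Fin (n+1) → Bool) → Set X) : Prop :=
  (∀ m, m < n → ∀ σ' : Fin (n+1) → Bool,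
     closure (D' m σ') ⊆ D m (fun i => σ' i.castSucc)) ∧
  (∀ q k : ℕ, q ≤ n → k ≤ n → ∀ ι : Fin k → ℕ × (Fin (n+1) → Bool),
     Function.Injective ι → (∀ a, (ι a).1 < n + 1) →
     {z : Fin k → X | ∀ a, z a ∈ D' (ι a).1 (ι a).2} ⊆ G q k)

private lemma myc_step
    (hperf : ∀ U : Set X, IsOpen U → U.Nonempty → ∃ a ∈ U, ∃ b ∈ U, a ≠ b)
    (W : ℕ → Set X) (hW : ∀ m, IsOpen (W m) ∧ (W m).Nonempty)
    (G : ℕ → ∀ k : ℕ, Set (Fin k → X)) (hGo : ∀ q k, IsOpen (G q k))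
    (hGd : ∀ q k, Dense (G q k))
    (n : ℕ) (D : ℕ → (Fin n → Bool) → Set X) (hD : MycInv W n D) :
    ∃ D' : ℕ → (Fin (n+1) → Bool) → Set X, MycInv W (n+1) D' ∧ MycTrans G n D D' := by
  classical
  -- binary splits of old cells
  have hpair : ∀ (m : ℕ), m < n → ∀ (σ : Fin n → Bool), ∃ P : Bool → Set X,
      (∀ b, IsOpen (P b) ∧ (P b).Nonempty ∧ closure (P b) ⊆ D m σ) ∧
      ∀ b c : Bool, b ≠ c → Disjoint (closure (P b)) (closure (P c)) := by
    intro m hm σ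
    obtain ⟨V₀, V₁, h₀, h₁, hdisj⟩ :=
      exists_pair_subsets hperf (hD m hm σ).1 (hD m hm σ).2.1
    refine ⟨fun b => if b then V₁ else V₀, ?_, ?_⟩
    · intro b; cases b
      · exact h₀
      · exact h₁
    · intro b c hbc; cases b <;> cases c
      · exact absurd rfl hbc
      · exact hdisj
      · exact hdisj.symm
      · exact absurd rfl hbc
  choose P hP hPdisj using hpair
  -- the new tree inside W n
  obtain ⟨V, hV, hVdisj⟩ := exists_multi_split hperf (n+1) (W n) (hW n).1 (hW n).2
  -- preliminary family
  set E : (Fin (n+1) × (Fin (n+1) → Bool)) → Set X := fun p =>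
    if h : (p.1 : ℕ) < n
      then P p.1 h (fun i => p.2 i.castSucc) (p.2 (Fin.last n))
      else V p.2 with hE
  have Eop : ∀ p, IsOpen (E p) := by
    intro p; by_cases h : (p.1 : ℕ) < n <;> simp only [hE, h, dif_pos, dif_neg, not_false_iff]
    · exact (hP _ h _ _).1
    · exact (hV _).1
  have Ene : ∀ p, (E p).Nonempty := by
    intro p; by_cases h : (p.1 : ℕ) < n <;> simp only [hE, h, dif_pos, dif_neg, not_false_iff]
    · exact (hP _ h _ _).2.1
    · exact (hV _).2.1
  have Echild : ∀ p (h : (p.1 : ℕ) < n),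
      closure (E p) ⊆ D p.1 (fun i => p.2 i.castSucc) := by
    intro p h; simp only [hE, h, dif_pos]
    exact (hP _ h _ _).2.2
  have Ecl : ∀ p, closure (E p) ⊆ W p.1 := by
    intro p
    by_cases h : (p.1 : ℕ) < n
    · exact (Echild p h).trans ((subset_closure).trans (hD _ h _).2.2.1)
    · have hpn : (p.1 : ℕ) = n := by omega
      simp only [hE, h, dif_neg, not_false_iff]
      rw [hpn]
      exact (hV _).2.2
  have Edisj : ∀ (m : Fin (n+1)) (σ τ : Fin (n+1) → Bool), σ ≠ τ →
      Disjoint (closure (E (m, σ))) (closure (E (m, τ))) := by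
    intro m σ τ h2
    by_cases h : (m : ℕ) < n
    · by_cases hinit : (fun i : Fin n => σ i.castSucc) = (fun i => τ i.castSucc)
      · have hlast : σ (Fin.last n) ≠ τ (Fin.last n) := by
          intro hc
          apply h2
          funext i
          refine Fin.lastCases hc (fun j => ?_) i
          exact congrFun hinit j
        simp only [hE, h, dif_pos]
        rw [hinit]
        exact hPdisj m h _ _ _ hlast
      · simp only [hE, h, dif_pos]
        exact ((hD m h _).2.2.2 _ hinit).mono
          ((hP m h _ _).2.2.trans subset_closure)
          ((hP m h _ _).2.2.trans subset_closure)
    · simp only [hE, h, dif_neg, not_false_iff]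
      exact hVdisj _ _ h2
  -- list of conditions to process
  set J := (Fin (n+1)) × Σ k : Fin (n+1),
      {f : Fin (k : ℕ) → Fin (n+1) × (Fin (n+1) → Bool) // Function.Injective f} with hJ
  set L : List ((k : ℕ) × ((Fin k → Fin (n+1) × (Fin (n+1) → Bool)) × Set (Fin k → X))) :=
    (Finset.univ : Finset J).toList.map
      (fun j => ⟨(j.2.1 : ℕ), (j.2.2.1, G j.1 j.2.1)⟩) with hL
  have hLgood : ∀ c ∈ L, Function.Injective c.2.1 ∧ IsOpen c.2.2 ∧ Dense c.2.2 := by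
    intro c hc
    rw [hL, List.mem_map] at hc
    obtain ⟨j, _, rfl⟩ := hc
    exact ⟨j.2.2.2, hGo _ _, hGd _ _⟩
  obtain ⟨E', h'op, h'ne, h'sub, h'box⟩ := shrink_list L hLgood E Eop Ene
  refine ⟨fun m σ' => if h : m < n + 1 then E' (⟨m, h⟩, σ') else univ, ?_, ?_, ?_⟩
  · -- MycInv (n+1)
    intro m hm σ'
    simp only [hm, dif_pos]
    refine ⟨h'op _, h'ne _, ?_, ?_⟩
    · exact (closure_mono (h'sub _)).trans (Ecl (⟨m, hm⟩, σ'))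
    · intro τ hστ
      exact (Edisj ⟨m, hm⟩ σ' τ hστ).mono
        (closure_mono (h'sub _)) (closure_mono (h'sub _))
  · -- transition: nesting
    intro m hm σ'
    have hm1 : m < n + 1 := by omega
    simp only [hm1, dif_pos]
    have := Echild (⟨m, hm1⟩, σ') (by simpa using hm)
    exact (closure_mono (h'sub _)).trans this
  · -- transition: conditions
    intro q k hq hk ι hι hbound
    set f : Fin k → Fin (n+1) × (Fin (n+1) → Bool) :=
      fun a => (⟨(ι a).1, hbound a⟩, (ι a).2) with hf
    have hfinj : Function.Injective f := by
      intro a b hab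
      apply hι
      have h1 : (ι a).1 = (ι b).1 := by
        have := congrArg (fun p => ((Prod.fst p : Fin (n+1)) : ℕ)) hab
        simpa [hf] using this
      have h2 : (ι a).2 = (ι b).2 := congrArg (fun p => p.2) hab
      exact Prod.ext h1 h2
    have hmem : (⟨k, (f, G q k)⟩ : (k : ℕ) × ((Fin k → Fin (n+1) × (Fin (n+1) → Bool)) × Set (Fin k → X))) ∈ L := by
      rw [hL, List.mem_map]
      refine ⟨(⟨q, by omega⟩, ⟨⟨k, by omega⟩, ⟨f, hfinj⟩⟩), by simp, rfl⟩
    have hbox := h'box _ hmem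
    intro z hz
    apply hbox
    intro a
    have := hz a
    simp only [hbound a, dif_pos] at this
    exact this
private theorem mycielski
    (hperf : ∀ U : Set X, IsOpen U → U.Nonempty → ∃ a ∈ U, ∃ b ∈ U, a ≠ b)
    (W : ℕ → Set X) (hW : ∀ m, IsOpen (W m) ∧ (W m).Nonempty)
    (hWb : ∀ x : X, ∀ r > 0, ∃ m, W m ⊆ ball x r)
    (G : ℕ → ∀ k : ℕ, Set (Fin k → X)) (hGo : ∀ q k, IsOpen (G q k))
    (hGd : ∀ q k, Dense (G q k)) :
    ∃ Θ : Set X, Dense Θ ∧ ¬ Θ.Countable ∧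
      ∀ q k, ∀ z : Fin k → X, (∀ i, z i ∈ Θ) → Function.Injective z → z ∈ G q k := by
  classical
  obtain ⟨step⟩ : Nonempty (∀ (n : ℕ) (D : ℕ → (Fin n → Bool) → Set X), MycInv W n D →
      {D' : ℕ → (Fin (n+1) → Bool) → Set X // MycInv W (n+1) D' ∧ MycTrans G n D D'}) :=
    ⟨fun n D hD => ⟨(myc_step hperf W hW G hGo hGd n D hD).choose,
      (myc_step hperf W hW G hGo hGd n D hD).choose_spec⟩⟩
  let seq : ∀ n : ℕ, {D : ℕ → (Fin n → Bool) → Set X // MycInv W n D} :=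
    fun n => Nat.rec ⟨fun _ _ => Set.univ, fun m hm => absurd hm (Nat.not_lt_zero m)⟩
      (fun n prev => ⟨(step n prev.1 prev.2).1, (step n prev.1 prev.2).2.1⟩) n
  have hInv : ∀ n, MycInv W n (seq n).1 := fun n => (seq n).2
  have htrans : ∀ n, MycTrans G n (seq n).1 (seq (n+1)).1 :=
    fun n => (step n (seq n).1 (seq n).2).2.2
  -- limit points
  have hkey : ∀ (m : ℕ) (α : ℕ → Bool), ∃ x : X,
      ∀ j : ℕ, x ∈ closure ((seq (m+1+j)).1 m (fun i : Fin (m+1+j) => α i)) := by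
    intro m α
    set K : ℕ → Set X := fun j => closure ((seq (m+1+j)).1 m (fun i : Fin (m+1+j) => α i))
      with hK
    have hnest : ∀ j, K (j+1) ⊆ K j := by
      intro j
      have h1 := (htrans (m+1+j)).1 m (by omega) (fun i : Fin (m+1+j+1) => α i)
      have h2 : (fun i : Fin (m+1+j) => α ((i.castSucc : Fin (m+1+j+1)) : ℕ))
          = fun i : Fin (m+1+j) => α i := by
        funext i; simp
      rw [h2] at h1
      exact h1.trans subset_closure
    have hne : ∀ j, (K j).Nonempty := by
      intro j
      exact ((hInv (m+1+j) m (by omega) _).2.1).mono subset_closure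
    have := IsCompact.nonempty_iInter_of_sequence_nonempty_isCompact_isClosed K hnest hne
      (isClosed_closure.isCompact) (fun j => isClosed_closure)
    obtain ⟨x, hx⟩ := this
    exact ⟨x, fun j => Set.mem_iInter.mp hx j⟩
  choose xp hxp using hkey
  have hxpcl : ∀ (m : ℕ) (α : ℕ → Bool) (N : ℕ), m < N →
      xp m α ∈ closure ((seq N).1 m (fun i : Fin N => α i)) := by
    intro m α N hN
    obtain ⟨j, rfl⟩ : ∃ j, N = m+1+j := ⟨N - m - 1, by omega⟩
    exact hxp m α j
  have hxpmem : ∀ (m : ℕ) (α : ℕ → Bool) (N : ℕ), m < N →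
      xp m α ∈ (seq N).1 m (fun i : Fin N => α i) := by
    intro m α N hN
    have h1 := (htrans N).1 m hN (fun i : Fin (N+1) => α i)
    have h2 : (fun i : Fin N => α ((i.castSucc : Fin (N+1)) : ℕ))
        = fun i : Fin N => α i := by funext i; simp
    rw [h2] at h1
    exact h1 (hxpcl m α (N+1) (by omega))
  have hsep : ∀ (m : ℕ) (α β : ℕ → Bool), α ≠ β → xp m α ≠ xp m β := by
    intro m α β hab
    obtain ⟨i₀, hi₀⟩ := Function.ne_iff.mp hab
    set N := max (m+1) (i₀+1) with hN
    have hmN : m < N := lt_of_lt_of_le (Nat.lt_succ_self m) (le_max_left _ _)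
    have hσ : (fun i : Fin N => α i) ≠ (fun i : Fin N => β i) := by
      intro hc
      exact hi₀ (congrFun hc ⟨i₀, lt_of_lt_of_le (Nat.lt_succ_self i₀) (le_max_right _ _)⟩)
    have hd := (hInv N m hmN _).2.2.2 _ hσ
    intro hc
    exact Set.disjoint_left.mp hd (hxpcl m α N hmN) (hc ▸ hxpcl m β N hmN)
  refine ⟨Set.range (fun mα : ℕ × (ℕ → Bool) => xp mα.1 mα.2), ?_, ?_, ?_⟩
  · -- dense
    rw [Metric.dense_iff]
    intro x r hr
    obtain ⟨m, hm⟩ := hWb x r hr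
    refine ⟨xp m (fun _ => false), ?_, ⟨(m, fun _ => false), rfl⟩⟩
    apply hm
    exact (hInv (m+1) m (Nat.lt_succ_self m) _).2.2.1 (hxpcl m _ (m+1) (Nat.lt_succ_self m))
  · -- uncountable
    intro hc
    have hsub : Set.range (fun α : ℕ → Bool => xp 0 α)
        ⊆ Set.range (fun mα : ℕ × (ℕ → Bool) => xp mα.1 mα.2) := by
      rintro _ ⟨α, rfl⟩; exact ⟨(0, α), rfl⟩
    have h1 : (Set.range (fun α : ℕ → Bool => xp 0 α)).Countable := hc.mono hsub
    have hinj0 : Function.Injective (fun α : ℕ → Bool => xp 0 α) := by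
      intro α β h
      by_contra hne
      exact hsep 0 α β hne h
    have h2 : ((fun α : ℕ → Bool => xp 0 α) ⁻¹'
        (Set.range (fun α : ℕ → Bool => xp 0 α))).Countable := h1.preimage hinj0
    have h3 : ((fun α : ℕ → Bool => xp 0 α) ⁻¹'
        (Set.range (fun α : ℕ → Bool => xp 0 α))) = Set.univ := by
      ext α; simp [Set.mem_preimage]
    rw [h3, Set.countable_univ_iff] at h2
    have : Countable (ℕ → Prop) :=
      Countable.of_equiv (ℕ → Bool) (Equiv.arrowCongr (Equiv.refl ℕ) Equiv.propEquivBool.symm)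
    have : Countable (Set ℕ) := this
    obtain ⟨f, hf⟩ := exists_injective_nat (Set ℕ)
    exact Function.cantor_injective f hf
  · -- the scrambling property
    intro q k z hzΘ hzinj
    choose p hp using hzΘ
    have hsepN : ∀ i j : Fin k, ∃ N₀ : ℕ, i ≠ j → ∀ N, N₀ ≤ N →
        ((p i).1, fun a : Fin (N+1) => (p i).2 a) ≠ ((p j).1, fun a : Fin (N+1) => (p j).2 a) := by
      intro i j
      by_cases hij : i = j
      · exact ⟨0, fun h => absurd hij h⟩
      by_cases hm : (p i).1 = (p j).1
      · have hαβ : (p i).2 ≠ (p j).2 := by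
          intro hc
          have hpp : p i = p j := Prod.ext hm hc
          have h1 : xp (p i).1 (p i).2 = z i := hp i
          have h2 : xp (p j).1 (p j).2 = z j := hp j
          exact hzinj.ne hij
            ((h1.symm.trans (congrArg (fun mα : ℕ × (ℕ → Bool) => xp mα.1 mα.2) hpp)).trans h2)
        obtain ⟨i₀, hi₀⟩ := Function.ne_iff.mp hαβ
        refine ⟨i₀, fun _ N hN => ?_⟩
        intro hc
        have := congrFun (congrArg Prod.snd hc) ⟨i₀, by omega⟩
        exact hi₀ this
      · exact ⟨0, fun _ N _ hc => hm ((Prod.ext_iff.mp hc).1)⟩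
    choose g hg using hsepN
    set S1 := Finset.univ.sup (fun i : Fin k => (p i).1) with hS1
    set S2 := Finset.univ.sup (fun ij : Fin k × Fin k => g ij.1 ij.2) with hS2
    set N := q + k + S1 + S2 with hNdef
    set ι : Fin k → ℕ × (Fin (N+1) → Bool) :=
      fun a => ((p a).1, fun i : Fin (N+1) => (p a).2 i) with hι
    have hιinj : Function.Injective ι := by
      intro a b hab
      by_contra hne
      have hgle : g a b ≤ N := by
        have : g a b ≤ S2 := Finset.le_sup (f := fun ij : Fin k × Fin k => g ij.1 ij.2)
          (Finset.mem_univ (a, b))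
        omega
      exact hg a b hne N hgle hab
    have hbound : ∀ a, (ι a).1 < N + 1 := by
      intro a
      have : (p a).1 ≤ S1 := Finset.le_sup (f := fun i : Fin k => (p i).1) (Finset.mem_univ a)
      simp only [hι]
      omega
    have hbox := (htrans N).2 q k (by omega) (by omega) ι hιinj hbound
    apply hbox
    intro a
    have := hxpmem (p a).1 (p a).2 (N+1) (by
      have : (p a).1 ≤ S1 := Finset.le_sup (f := fun i : Fin k => (p i).1) (Finset.mem_univ a)
      omega)
    have hpa : xp (p a).1 (p a).2 = z a := hp a
    rw [hpa] at this
    exact this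
end Myc

section Flow
variable {T X : Type*} [CommGroup T] [TopologicalSpace T] [IsTopologicalGroup T]
  [MetricSpace X] [CompactSpace X] [MulAction T X] [ContinuousSMul T X]

private lemma flow_smul_comm (t s : T) (x : X) : t • s • x = s • t • x := by
  rw [smul_smul, smul_smul, mul_comm]

private lemma flow_perfect (hnontriv : ∃ a b : X, a ≠ b)
    (hmin : ∀ x : X, Dense (MulAction.orbit T x))
    (hwm : ∀ W₁ W₂ : Set (X × X), IsOpen W₁ → W₁.Nonempty → IsOpen W₂ → W₂.Nonempty →
      ∃ t : T, ∃ w ∈ W₁, (t • w.1, t • w.2) ∈ W₂) :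
    ∀ U : Set X, IsOpen U → U.Nonempty → ∃ a ∈ U, ∃ b ∈ U, a ≠ b := by
  intro U hU hne
  by_contra hcon
  push_neg at hcon
  obtain ⟨x, hx⟩ := hne
  have hUx : U = {x} := subset_antisymm (fun u hu => hcon u hu x hx)
    (by rintro u rfl; exact hx)
  have hsingleton : ∀ y : X, IsOpen ({y} : Set X) := by
    intro y
    obtain ⟨g, hg⟩ : ∃ g : T, g • y ∈ U := by
      obtain ⟨u, huU, huorb⟩ := dense_iff_inter_open.mp (hmin y) U hU ⟨x, hx⟩
      obtain ⟨g, hgy⟩ := MulAction.mem_orbit_iff.mp huorb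
      exact ⟨g, hgy ▸ huU⟩
    have hgx : g • y = x := by rwa [hUx, Set.mem_singleton_iff] at hg
    have hset : ({y} : Set X) = (fun u : X => g • u) ⁻¹' {x} := by
      ext u
      simp only [Set.mem_preimage, Set.mem_singleton_iff, ← hgx]
      exact ⟨fun h => by rw [h], fun h => smul_left_cancel_iff g |>.mp h⟩
    rw [hset]
    exact (hUx ▸ hU : IsOpen ({x} : Set X)).preimage (continuous_const_smul g)
  obtain ⟨a, b, hab⟩ := hnontriv
  obtain ⟨t, w, hw1, hw2⟩ := hwm (({a} : Set X) ×ˢ ({b} : Set X))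
    (({a} : Set X) ×ˢ ({a} : Set X))
    ((hsingleton a).prod (hsingleton b)) ⟨(a, b), by simp⟩
    ((hsingleton a).prod (hsingleton a)) ⟨(a, a), by simp⟩
  rw [Set.mem_prod] at hw1 hw2
  obtain ⟨hwa, hwb⟩ := hw1
  rw [Set.mem_singleton_iff] at hwa hwb
  have h1 : t • w.1 = a := hw2.1
  have h2 : t • w.2 = a := hw2.2
  apply hab
  rw [← hwa, ← hwb]
  exact smul_left_cancel_iff t |>.mp (h1.trans h2.symm)

private lemma flow_notCompactT (hnontriv : ∃ a b : X, a ≠ b)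
    (hwm : ∀ W₁ W₂ : Set (X × X), IsOpen W₁ → W₁.Nonempty → IsOpen W₂ → W₂.Nonempty →
      ∃ t : T, ∃ w ∈ W₁, (t • w.1, t • w.2) ∈ W₂)
    (hcomp : IsCompact (Set.univ : Set T)) : False := by
  obtain ⟨a, b, hab⟩ := hnontriv
  have hε : 0 < dist a b := dist_pos.mpr hab
  haveI : CompactSpace T := isCompact_univ_iff.mp hcomp
  set K : Set (T × X × X) := {p | dist a b / 2 ≤ dist (p.1 • p.2.1) (p.1 • p.2.2)} with hK
  have hcont : Continuous fun p : T × X × X => dist (p.1 • p.2.1) (p.1 • p.2.2) := by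
    apply Continuous.dist
    · exact continuous_smul.comp (continuous_fst.prodMk (continuous_fst.comp continuous_snd))
    · exact continuous_smul.comp
        (continuous_fst.prodMk (continuous_snd.comp continuous_snd))
  have hKclosed : IsClosed K := isClosed_le continuous_const hcont
  have hKcomp : IsCompact K := hKclosed.isCompact
  set img := (fun p : T × X × X => dist p.2.1 p.2.2) '' K with himg
  have himgcomp : IsCompact img := hKcomp.image
    (Continuous.dist (continuous_fst.comp continuous_snd) (continuous_snd.comp continuous_snd))
  have hKne : K.Nonempty := ⟨(1, a, b), by simp only [hK, Set.mem_setOf_eq, one_smul]; linarith⟩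
  have himgne : img.Nonempty := hKne.image _
  set δ := sInf img with hδ
  have hδmem : δ ∈ img := himgcomp.sInf_mem himgne
  have hδpos : 0 < δ := by
    obtain ⟨p, hpK, hpd⟩ := hδmem
    rw [← hpd]
    rcases eq_or_ne p.2.1 p.2.2 with h | h
    · exfalso
      have : dist (p.1 • p.2.1) (p.1 • p.2.2) = 0 := by rw [h, dist_self]
      have hp2 := hpK
      rw [hK, Set.mem_setOf_eq, this] at hp2
      linarith
    · exact dist_pos.mpr h
  have hequi : ∀ (t : T) (x y : X), dist x y < δ → dist (t • x) (t • y) < dist a b / 2 := by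
    intro t x y hxy
    by_contra hge
    push_neg at hge
    have hm : (t, x, y) ∈ K := hge
    have : dist x y ∈ img := ⟨(t, x, y), hm, rfl⟩
    have := csInf_le himgcomp.bddBelow this
    rw [← hδ] at this
    linarith
  obtain ⟨t, w, hw1, hw2⟩ := hwm (ball a (δ/2) ×ˢ ball a (δ/2))
    (ball a (dist a b/4) ×ˢ ball b (dist a b/4))
    (isOpen_ball.prod isOpen_ball)
    ⟨(a, a), Set.mem_prod.mpr ⟨mem_ball_self (by linarith), mem_ball_self (by linarith)⟩⟩
    (isOpen_ball.prod isOpen_ball)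
    ⟨(a, b), Set.mem_prod.mpr ⟨mem_ball_self (by linarith), mem_ball_self (by linarith)⟩⟩
  rw [Set.mem_prod] at hw1 hw2
  have hd12 : dist w.1 w.2 < δ := by
    have h1 : dist w.1 a < δ/2 := mem_ball.mp hw1.1
    have h2 : dist w.2 a < δ/2 := mem_ball.mp hw1.2
    calc dist w.1 w.2 ≤ dist w.1 a + dist a w.2 := dist_triangle _ _ _
      _ = dist w.1 a + dist w.2 a := by rw [dist_comm a w.2]
      _ < δ := by linarith
  have h2 := hequi t w.1 w.2 hd12
  have h1 : dist a (t • w.1) < dist a b / 4 := by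
    rw [dist_comm]; exact mem_ball.mp hw2.1
  have h3 : dist (t • w.2) b < dist a b / 4 := mem_ball.mp hw2.2
  have h4 := dist_triangle4 a (t • w.1) (t • w.2) b
  linarith

private lemma NN_nonempty (hX : Nonempty X)
    (hwm : ∀ W₁ W₂ : Set (X × X), IsOpen W₁ → W₁.Nonempty → IsOpen W₂ → W₂.Nonempty →
      ∃ t : T, ∃ w ∈ W₁, (t • w.1, t • w.2) ∈ W₂)
    {U V : Set X} (hU : IsOpen U) (hUne : U.Nonempty) (hV : IsOpen V) (hVne : V.Nonempty) :
    ∃ t : T, ∃ x ∈ U, t • x ∈ V := by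
  obtain ⟨t, w, hw1, hw2⟩ := hwm (U ×ˢ (univ : Set X)) (V ×ˢ (univ : Set X))
    (hU.prod isOpen_univ) (hUne.prod univ_nonempty)
    (hV.prod isOpen_univ) (hVne.prod univ_nonempty)
  exact ⟨t, w.1, hw1.1, hw2.1⟩

private lemma NN_filter
    (hwm : ∀ W₁ W₂ : Set (X × X), IsOpen W₁ → W₁.Nonempty → IsOpen W₂ → W₂.Nonempty →
      ∃ t : T, ∃ w ∈ W₁, (t • w.1, t • w.2) ∈ W₂)
    {U₁ V₁ U₂ V₂ : Set X} (hU₁ : IsOpen U₁) (hU₁n : U₁.Nonempty)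
    (hV₁ : IsOpen V₁) (hV₁n : V₁.Nonempty)
    (hU₂ : IsOpen U₂) (hU₂n : U₂.Nonempty) (hV₂ : IsOpen V₂) (hV₂n : V₂.Nonempty) :
    ∃ U V : Set X, IsOpen U ∧ U.Nonempty ∧ IsOpen V ∧ V.Nonempty ∧
      ∀ s : T, (∃ x ∈ U, s • x ∈ V) →
        (∃ x ∈ U₁, s • x ∈ V₁) ∧ (∃ x ∈ U₂, s • x ∈ V₂) := by
  obtain ⟨t, w, hw1, hw2⟩ := hwm (U₁ ×ˢ V₁) (U₂ ×ˢ V₂)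
    (hU₁.prod hV₁) (hU₁n.prod hV₁n) (hU₂.prod hV₂) (hU₂n.prod hV₂n)
  rw [Set.mem_prod] at hw1 hw2
  refine ⟨U₁ ∩ (fun u : X => t • u) ⁻¹' U₂, V₁ ∩ (fun u : X => t • u) ⁻¹' V₂,
    hU₁.inter (hU₂.preimage (continuous_const_smul t)), ⟨w.1, hw1.1, hw2.1⟩,
    hV₁.inter (hV₂.preimage (continuous_const_smul t)), ⟨w.2, hw1.2, hw2.2⟩, ?_⟩
  rintro s ⟨x, ⟨hx1, hx2⟩, hsx1, hsx2⟩
  constructor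
  · exact ⟨x, hx1, hsx1⟩
  · refine ⟨t • x, hx2, ?_⟩
    rw [flow_smul_comm]
    exact hsx2

private lemma ktrans (hX : Nonempty X)
    (hwm : ∀ W₁ W₂ : Set (X × X), IsOpen W₁ → W₁.Nonempty → IsOpen W₂ → W₂.Nonempty →
      ∃ t : T, ∃ w ∈ W₁, (t • w.1, t • w.2) ∈ W₂)
    (k : ℕ) (U V : Fin k → Set X) (hUo : ∀ i, IsOpen (U i)) (hUn : ∀ i, (U i).Nonempty)
    (hVo : ∀ i, IsOpen (V i)) (hVn : ∀ i, (V i).Nonempty) :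
    ∃ t : T, ∀ i, ∃ x ∈ U i, t • x ∈ V i := by
  suffices h : ∃ U₀ V₀ : Set X, IsOpen U₀ ∧ U₀.Nonempty ∧ IsOpen V₀ ∧ V₀.Nonempty ∧
      ∀ s : T, (∃ x ∈ U₀, s • x ∈ V₀) → ∀ i, ∃ x ∈ U i, s • x ∈ V i by
    obtain ⟨U₀, V₀, h1, h2, h3, h4, hsub⟩ := h
    obtain ⟨t, x, hx, htx⟩ := NN_nonempty hX hwm h1 h2 h3 h4
    exact ⟨t, hsub t ⟨x, hx, htx⟩⟩
  induction k with
  | zero =>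
    exact ⟨univ, univ, isOpen_univ, univ_nonempty, isOpen_univ, univ_nonempty,
      fun s _ i => i.elim0⟩
  | succ k ih =>
    obtain ⟨U₁, V₁, h1, h2, h3, h4, hsub₁⟩ := ih (fun i => U i.succ) (fun i => V i.succ)
      (fun i => hUo i.succ) (fun i => hUn i.succ) (fun i => hVo i.succ) (fun i => hVn i.succ)
    obtain ⟨U₀, V₀, g1, g2, g3, g4, hsub₀⟩ := NN_filter hwm (hUo 0) (hUn 0) (hVo 0) (hVn 0)
      h1 h2 h3 h4
    refine ⟨U₀, V₀, g1, g2, g3, g4, ?_⟩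
    intro s hs i
    obtain ⟨hs0, hs1⟩ := hsub₀ s hs
    refine Fin.cases ?_ (fun j => ?_) i
    · exact hs0
    · exact hsub₁ s hs1 j

private lemma A_open (k : ℕ) (ε : ℝ) :
    IsOpen {z : Fin k → X | ∃ t : T, ∃ p : X, ∀ i, dist (t • z i) p < ε} := by
  apply isOpen_iff_forall_mem_open.mpr
  rintro z ⟨t, p, hz⟩
  refine ⟨{y : Fin k → X | ∀ i, dist (t • y i) p < ε}, fun y hy => ⟨t, p, hy⟩, ?_, hz⟩
  have heq : {y : Fin k → X | ∀ i, dist (t • y i) p < ε}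
      = ⋂ i, (fun y : Fin k → X => t • y i) ⁻¹' (ball p ε) := by
    ext y; simp [mem_ball]
  rw [heq]
  exact isOpen_iInter_of_finite fun i =>
    isOpen_ball.preimage ((continuous_const_smul t).comp (continuous_apply i))

private lemma A_dense (hX : Nonempty X)
    (hwm : ∀ W₁ W₂ : Set (X × X), IsOpen W₁ → W₁.Nonempty → IsOpen W₂ → W₂.Nonempty →
      ∃ t : T, ∃ w ∈ W₁, (t • w.1, t • w.2) ∈ W₂)
    (k : ℕ) (ε : ℝ) (hε : 0 < ε) :
    Dense {z : Fin k → X | ∃ t : T, ∃ p : X, ∀ i, dist (t • z i) p < ε} := by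
  rw [Metric.dense_iff]
  intro z r hr
  obtain ⟨c⟩ := id hX
  obtain ⟨t, ht⟩ := ktrans hX hwm k (fun i => ball (z i) r) (fun _ => ball c ε)
    (fun _ => isOpen_ball) (fun i => ⟨z i, mem_ball_self hr⟩)
    (fun _ => isOpen_ball) (fun _ => ⟨c, mem_ball_self hε⟩)
  choose y hy1 hy2 using ht
  refine ⟨y, ?_, t, c, fun i => mem_ball.mp (hy2 i)⟩
  rw [mem_ball, dist_pi_lt_iff hr]
  exact fun i => mem_ball.mp (hy1 i)

private lemma B_open (F : Set T) (k : ℕ) (ε : ℝ) :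
    IsOpen {z : Fin k → X | ∃ s : T, s ∉ F ∧ ∀ i, dist (s • z i) (z i) < ε} := by
  apply isOpen_iff_forall_mem_open.mpr
  rintro z ⟨s, hs, hz⟩
  refine ⟨{y : Fin k → X | ∀ i, dist (s • y i) (y i) < ε}, fun y hy => ⟨s, hs, hy⟩, ?_, hz⟩
  have heq : {y : Fin k → X | ∀ i, dist (s • y i) (y i) < ε}
      = ⋂ i, (fun y : Fin k → X => dist (s • y i) (y i)) ⁻¹' (Iio ε) := by
    ext y; simp
  rw [heq]
  exact isOpen_iInter_of_finite fun i =>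
    isOpen_Iio.preimage (Continuous.dist
      ((continuous_const_smul s).comp (continuous_apply i)) (continuous_apply i))

private lemma B_dense (hnontriv : ∃ a b : X, a ≠ b)
    (hmin : ∀ x : X, Dense (MulAction.orbit T x))
    (hwm : ∀ W₁ W₂ : Set (X × X), IsOpen W₁ → W₁.Nonempty → IsOpen W₂ → W₂.Nonempty →
      ∃ t : T, ∃ w ∈ W₁, (t • w.1, t • w.2) ∈ W₂)
    {F : Set T} (hF : IsCompact F) (k : ℕ) (ε : ℝ) (hε : 0 < ε) :
    Dense {z : Fin k → X | ∃ s : T, s ∉ F ∧ ∀ i, dist (s • z i) (z i) < ε} := by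
  have hX : Nonempty X := ⟨hnontriv.choose⟩
  obtain ⟨c⟩ := id hX
  rw [Metric.dense_iff]
  intro z r hr
  have horb : ∀ i : Fin k, ∃ g : T, g • c ∈ ball (z i) r := by
    intro i
    obtain ⟨u, hu1, hu2⟩ := dense_iff_inter_open.mp (hmin c) (ball (z i) r) isOpen_ball
      ⟨z i, mem_ball_self hr⟩
    obtain ⟨g, hg⟩ := MulAction.mem_orbit_iff.mp hu2
    exact ⟨g, hg ▸ hu1⟩
  choose g hg using horb
  set Wset : Set X := ⋂ i, (fun u : X => g i • u) ⁻¹' (ball (g i • c) ε) with hWset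
  have hWo : IsOpen Wset := isOpen_iInter_of_finite fun i =>
    isOpen_ball.preimage (continuous_const_smul _)
  have hcW : c ∈ Wset := mem_iInter.mpr fun i => by
    simp only [Set.mem_preimage, mem_ball, dist_self]
    exact hε
  have hret : ∃ s : T, s • c ∈ Wset ∧ s ∉ F := by
    by_contra hcon
    push_neg at hcon
    have hcover : (univ : Set X) ⊆ ⋃ t : T, (fun u : X => t • u) ⁻¹' Wset := by
      intro u _
      obtain ⟨v, hv1, hv2⟩ := dense_iff_inter_open.mp (hmin u) Wset hWo ⟨c, hcW⟩
      obtain ⟨t, ht⟩ := MulAction.mem_orbit_iff.mp hv2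
      exact mem_iUnion.mpr ⟨t, by rw [Set.mem_preimage, ht]; exact hv1⟩
    obtain ⟨Kf, hKf⟩ := isCompact_univ.elim_finite_subcover
      (fun t : T => (fun u : X => t • u) ⁻¹' Wset)
      (fun t => hWo.preimage (continuous_const_smul t)) hcover
    have hsub : (univ : Set T) ⊆ ⋃ t ∈ Kf, (fun u : T => t⁻¹ * u) '' F := by
      intro h _
      obtain ⟨t, htK, ht⟩ := Set.mem_iUnion₂.mp (hKf (mem_univ (h • c)))
      rw [Set.mem_preimage] at ht
      have hth : (t * h) • c ∈ Wset := by rwa [mul_smul]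
      have : t * h ∈ F := hcon (t * h) hth
      exact Set.mem_iUnion₂.mpr ⟨t, htK, ⟨t * h, this, by group⟩⟩
    have hcpt : IsCompact (univ : Set T) := IsCompact.of_isClosed_subset
      (Kf.isCompact_biUnion fun t _ => hF.image (continuous_mul_left t⁻¹))
      isClosed_univ hsub
    exact flow_notCompactT hnontriv hwm hcpt
  obtain ⟨s, hsW, hsF⟩ := hret
  refine ⟨fun i => g i • c, ?_, s, hsF, ?_⟩
  · rw [mem_ball, dist_pi_lt_iff hr]
    exact fun i => mem_ball.mp (hg i)
  · intro i
    have hmem := mem_iInter.mp hsW i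
    rw [Set.mem_preimage, mem_ball] at hmem
    rw [flow_smul_comm]
    exact hmem
end Flow


/-- A minimal topologically weakly mixing flow on a compact metric space with at least
two points, with an abelian topological phase group, is densely multi-dimensional
Li-Yorke chaotic. -/
theorem minimal_weaklyMixing_abelian_densely_multidimensional_LiYorke
    {T X : Type*} [CommGroup T] [TopologicalSpace T] [IsTopologicalGroup T]
    [MetricSpace X] [CompactSpace X] [MulAction T X] [ContinuousSMul T X]
    (hnontriv : ∃ a b : X, a ≠ b)
    (hmin : ∀ x : X, Dense (MulAction.orbit T x))
    (hwm : ∀ W₁ W₂ : Set (X × X), IsOpen W₁ → W₁.Nonempty → IsOpen W₂ → W₂.Nonempty →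
      ∃ t : T, ∃ w ∈ W₁, (t • w.1, t • w.2) ∈ W₂) :
    ∀ F : ℕ → Set T, (∀ n, IsCompact (F n)) → Monotone F →
      ∃ Θ : Set X, Dense Θ ∧ ¬ Θ.Countable ∧
        ∀ k : ℕ, 2 ≤ k → ∀ z : Fin k → X, (∀ i, z i ∈ Θ) → Function.Injective z →
          ∃ p : X, ∃ t s : ℕ → T, (∀ n, s n ∉ F n) ∧
            (∀ i, Tendsto (fun n => t n • z i) atTop (𝓝 p)) ∧
            (∀ i, Tendsto (fun n => s n • z i) atTop (𝓝 (z i))) := by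
  intro F hFcomp _hFmono
  have hX : Nonempty X := ⟨hnontriv.choose⟩
  obtain ⟨d, hd⟩ := TopologicalSpace.exists_dense_seq X
  set W : ℕ → Set X := fun m =>
    Metric.ball (d (Nat.unpair m).1) (1/((Nat.unpair m).2+1)) with hWdef
  have hWprop : ∀ m, IsOpen (W m) ∧ (W m).Nonempty :=
    fun m => ⟨Metric.isOpen_ball, ⟨d _, Metric.mem_ball_self (by positivity)⟩⟩
  have hWb : ∀ x : X, ∀ r > 0, ∃ m, W m ⊆ Metric.ball x r := by
    intro x r hr
    obtain ⟨u, hu1, hu2⟩ := dense_iff_inter_open.mp (hd : Dense (Set.range d))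
      (Metric.ball x (r/2)) Metric.isOpen_ball ⟨x, Metric.mem_ball_self (by linarith)⟩
    obtain ⟨j, rfl⟩ : ∃ j, d j = u := hu2
    obtain ⟨l, hl⟩ : ∃ l : ℕ, 1/((l : ℝ)+1) < r/2 := by
      obtain ⟨l, hl⟩ := exists_nat_one_div_lt (show (0:ℝ) < r/2 by linarith)
      exact ⟨l, by exact_mod_cast hl⟩
    refine ⟨Nat.pair j l, ?_⟩
    intro v hv
    rw [hWdef] at hv
    simp only [Nat.unpair_pair] at hv
    rw [Metric.mem_ball] at hv ⊢
    have h1 : dist (d j) x < r/2 := Metric.mem_ball.mp hu1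
    calc dist v x ≤ dist v (d j) + dist (d j) x := dist_triangle _ _ _
      _ < 1/((l:ℝ)+1) + r/2 := by linarith
      _ < r := by linarith
  have hεq : ∀ q : ℕ, (0:ℝ) < 1/((q:ℝ)+1) := fun q => by positivity
  set G : ℕ → ∀ k : ℕ, Set (Fin k → X) := fun q k =>
    {z : Fin k → X | ∃ t : T, ∃ p : X, ∀ i, dist (t • z i) p < 1/((q:ℝ)+1)} ∩
    {z : Fin k → X | ∃ s : T, s ∉ F q ∧ ∀ i, dist (s • z i) (z i) < 1/((q:ℝ)+1)} with hGdef
  have hGo : ∀ q k, IsOpen (G q k) := fun q k =>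
    (A_open (T := T) k _).inter (B_open (F q) k _)
  have hGd : ∀ q k, Dense (G q k) := fun q k =>
    Dense.inter_of_isOpen_left (A_dense hX hwm k _ (hεq q))
      (B_dense hnontriv hmin hwm (hFcomp q) k _ (hεq q)) (A_open (T := T) k _)
  have hperf := flow_perfect hnontriv hmin hwm
  obtain ⟨Θ, hΘd, hΘc, hΘG⟩ := mycielski hperf W hWprop hWb G hGo hGd
  refine ⟨Θ, hΘd, hΘc, ?_⟩
  intro k _hk z hzΘ hzinj
  have hall : ∀ q : ℕ,
      (∃ t : T, ∃ p : X, ∀ i, dist (t • z i) p < 1/((q:ℝ)+1)) ∧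
      (∃ s : T, s ∉ F q ∧ ∀ i, dist (s • z i) (z i) < 1/((q:ℝ)+1)) :=
    fun q => hΘG q k z hzΘ hzinj
  choose s hs1 hs2 using fun q => (hall q).2
  choose t pt hpt using fun q => (hall q).1
  obtain ⟨p, -, φ, hφ, hφt⟩ := isCompact_univ.tendsto_subseq (x := pt) (fun n => Set.mem_univ _)
  refine ⟨p, fun n => t (φ n), s, hs1, ?_, ?_⟩
  · intro i
    rw [tendsto_iff_dist_tendsto_zero]
    have hb : Tendsto (fun n : ℕ => 1/((φ n : ℝ)+1) + dist (pt (φ n)) p) atTop (𝓝 0) := by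
      have h1 : Tendsto (fun n : ℕ => 1/((φ n : ℝ)+1)) atTop (𝓝 0) := by
        apply squeeze_zero (fun n => by positivity) (g := fun n : ℕ => 1/((n:ℝ)+1))
        · intro n
          apply one_div_le_one_div_of_le (by positivity)
          have h : n ≤ φ n := hφ.le_apply
          have h' : ((n:ℝ)) ≤ ((φ n : ℝ)) := by exact_mod_cast h
          linarith
        · exact tendsto_one_div_add_atTop_nhds_zero_nat
      have h2 : Tendsto (fun n => dist (pt (φ n)) p) atTop (𝓝 0) :=
        tendsto_iff_dist_tendsto_zero.mp hφt
      simpa using h1.add h2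
    apply squeeze_zero (fun n => dist_nonneg) _ hb
    intro n
    calc dist (t (φ n) • z i) p
        ≤ dist (t (φ n) • z i) (pt (φ n)) + dist (pt (φ n)) p := dist_triangle _ _ _
      _ ≤ 1/((φ n : ℝ)+1) + dist (pt (φ n)) p := by
          have := hpt (φ n) i
          linarith
  · intro i
    rw [tendsto_iff_dist_tendsto_zero]
    apply squeeze_zero (fun n => dist_nonneg) (g := fun n : ℕ => 1/((n:ℝ)+1))
    · exact fun n => le_of_lt (hs2 n i)
    · exact tendsto_one_div_add_atTop_nhds_zero_nat
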